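/- Let k ∈ ℕ with k ≥ 2 and α, β ∈ ℝ, and define f_k(r) = ∑_{i=0}^{k} r^{2i} for integers r. If (24 n⁴ β − 6 n² α) · f_k(n) = (6 n⁴ β − 6 n² α) · f_k(2n) for all integers n ≥ 1, then α = 0 and β = 0. -/

import Mathlib

open Finset

/-- For `k ≥ 2` the symmetry condition forces `α = 0` and `β = 0`: `X_k` is not
Hamiltonian with respect to any modified Lie-Poisson structure with constant `m₀`. -/
theorem symmetry_condition_k_ge_two (k : ℕ) (hk : 2 ≤ k) (α β : ℝ)
    (h : ∀ n : ℤ, 1 ≤ n →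
      (24 * (n : ℝ) ^ 4 * β - 6 * (n : ℝ) ^ 2 * α)
          * (∑ i ∈ Finset.range (k + 1), (n : ℝ) ^ (2 * i))
        = (6 * (n : ℝ) ^ 4 * β - 6 * (n : ℝ) ^ 2 * α)
          * (∑ i ∈ Finset.range (k + 1), ((2 * n : ℤ) : ℝ) ^ (2 * i))) :
    α = 0 ∧ β = 0 := by
  set x : ℝ := 4 ^ (k + 1) with hx
  have hx64 : (64 : ℝ) ≤ x := by
    calc (64 : ℝ) = 4 ^ 3 := by norm_num
    _ ≤ 4 ^ (k + 1) := by
      apply pow_le_pow_right₀ (by norm_num)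
      omega
  have hs1 : (∑ i ∈ Finset.range (k + 1), (1 : ℝ) ^ (2 * i)) = (k : ℝ) + 1 := by
    simp
  have hs2 : (∑ i ∈ Finset.range (k + 1), (2 : ℝ) ^ (2 * i)) = (x - 1) / 3 := by
    have e : ∀ i ∈ Finset.range (k + 1), (2 : ℝ) ^ (2 * i) = 4 ^ i := by
      intro i _; rw [pow_mul]; norm_num
    rw [Finset.sum_congr rfl e, geom_sum_eq (by norm_num)]
    norm_num [hx]
  have hs4 : (∑ i ∈ Finset.range (k + 1), (4 : ℝ) ^ (2 * i)) = (x ^ 2 - 1) / 15 := by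
    have e : ∀ i ∈ Finset.range (k + 1), (4 : ℝ) ^ (2 * i) = 16 ^ i := by
      intro i _; rw [pow_mul]; norm_num
    have h16 : (16 : ℝ) ^ (k + 1) = x ^ 2 := by
      rw [hx, show (16 : ℝ) = 4 ^ 2 by norm_num, ← pow_mul, mul_comm, pow_mul]
    rw [Finset.sum_congr rfl e, geom_sum_eq (by norm_num), h16]
    norm_num
  have h1 := h 1 (by norm_num)
  have h2 := h 2 (by norm_num)
  norm_num at h1 h2
  rw [hs2] at h1
  rw [hs2, hs4] at h2
  -- e2 : α (x-4) = 4 β (x-19), after cancelling x-1 ≠ 0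
  have hxne : x - 1 ≠ 0 := by nlinarith
  have e2 : α * (x - 4) - 4 * β * (x - 19) = 0 := by
    have key : (x - 1) * (24 * (α * (x - 4) - 4 * β * (x - 19))) = 0 := by
      linear_combination (15 : ℝ) * h2
    rcases mul_eq_zero.1 key with h' | h'
    · exact absurd h' hxne
    · linarith
  have e1 : α * (x - 1 - 3 * ((k : ℝ) + 1)) - β * (x - 1 - 12 * ((k : ℝ) + 1)) = 0 := by
    linear_combination ((1 : ℝ) / 2) * h1
  have bracket : α * (3 * (x - 1) * (x - 24) + 180 * ((k : ℝ) + 1)) = 0 := by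
    linear_combination (4 * (x - 19)) * e1 - (x - 1 - 12 * ((k : ℝ) + 1)) * e2
  have hbpos : 0 < 3 * (x - 1) * (x - 24) + 180 * ((k : ℝ) + 1) := by
    have : (0 : ℝ) ≤ (k : ℝ) := Nat.cast_nonneg k
    nlinarith
  have hα : α = 0 := by
    rcases mul_eq_zero.1 bracket with h' | h'
    · exact h'
    · linarith
  refine ⟨hα, ?_⟩
  rw [hα] at e2
  have : 4 * β * (x - 19) = 0 := by linarith
  rcases mul_eq_zero.1 this with h' | h'
  · rcases mul_eq_zero.1 h' with h'' | h''
    · norm_num at h''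
    · exact h''
  · nlinarith
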